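/- arXiv:0812.0146 — 2 statements merged into one kernel-verified Lean document; each statement's English description precedes it below -/
import Mathlib

section
/- Let 𝒜 be a concept class on a set Ω with VC dimension at most p ≥ 1, and let h ≥ 1. Then the class of all sets obtained as intersections of at most h sets, each of which is either a member of 𝒜 or the complement of a member of 𝒜, has VC dimension at most 4hp·log₂(2hp). -/
open scoped Classical

/-- A family `𝒜` of subsets of `Ω` shatters a finite set `B` if every subset of `B`
is cut out by a member of `𝒜`. -/
def Shatters {Ω : Type*} (𝒜 : Set (Set Ω)) (B : Finset Ω) : Prop :=
  ∀ C ⊆ B, ∃ A ∈ 𝒜, A ∩ (B : Set Ω) = (C : Set Ω)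

/-- The class of sets obtained as intersections of at most `h` sets, each of which is a
member of `𝒜` or a complement of a member of `𝒜`. -/
def InterClass {Ω : Type*} (𝒜 : Set (Set Ω)) (h : ℕ) : Set (Set Ω) :=
  {S | ∃ T : Finset (Set Ω), T.card ≤ h ∧
      (∀ A ∈ T, A ∈ 𝒜 ∨ ∃ A' ∈ 𝒜, A = A'ᶜ) ∧ S = ⋂₀ (T : Set (Set Ω))}

open Finset in
lemma aux_sum_choose (d p : ℕ) : ∑ i ∈ Finset.range (p+1), d.choose i ≤ (d+1)^p := by
  induction p with
  | zero => simp
  | succ p ih =>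
    rw [Finset.sum_range_succ]
    have h1 : d.choose (p+1) ≤ d^(p+1) := Nat.choose_le_pow _ _
    have h2 : d^(p+1) ≤ d*(d+1)^p := by
      rw [pow_succ']
      exact Nat.mul_le_mul_left d (Nat.pow_le_pow_left (Nat.le_succ d) p)
    calc ∑ i ∈ Finset.range (p+1), d.choose i + d.choose (p+1)
        ≤ (d+1)^p + d*(d+1)^p := Nat.add_le_add ih (h1.trans h2)
      _ = (d+1)^(p+1) := by ring
  
lemma aux_lin_lt_pow (d : ℕ) (hd : 5 ≤ d) : 2*d+3 < 2^d := by
  induction d with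
  | zero => omega
  | succ d ih =>
    rcases Nat.lt_or_ge d 5 with h | h
    · interval_cases d <;> simp_all <;> omega
    · have := ih (by omega)
      have : 2^d ≥ 13 := by calc 2^d ≥ 2^5 := Nat.pow_le_pow_right (by norm_num) (by omega)
                                 _ ≥ 13 := by norm_num
      rw [pow_succ]; omega


open Real

lemma aux_logb_lin (m x : ℝ) (hm : 0 < m) (hx : 0 < x) :
    logb 2 x ≤ x/m + logb 2 m - (Real.log (Real.log 2) + 1)/Real.log 2 := by
  have hl2 : 0 < Real.log 2 := Real.log_pos (by norm_num)
  have hkey : Real.log x ≤ x * Real.log 2 / m - 1 + Real.log m - Real.log (Real.log 2) := by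
    have h1 : Real.log (x * Real.log 2 / m) ≤ x * Real.log 2 / m - 1 :=
      Real.log_le_sub_one_of_pos (by positivity)
    have h2 : Real.log (x * Real.log 2 / m)
        = Real.log x + Real.log (Real.log 2) - Real.log m := by
      rw [Real.log_div (by positivity) (by positivity), Real.log_mul hx.ne' hl2.ne']
    linarith
  unfold Real.logb
  rw [div_le_iff₀ hl2]
  have e1 : (x / m + Real.log m / Real.log 2 - (Real.log (Real.log 2) + 1) / Real.log 2)
      * Real.log 2 = x * Real.log 2 / m + Real.log m - Real.log (Real.log 2) - 1 := by
    field_simp; ring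
  rw [e1]
  linarith

lemma aux_cbound : (1:ℝ)/2 ≤ (Real.log (Real.log 2) + 1)/Real.log 2 := by
  have hgt := Real.log_two_gt_d9
  have hlt := Real.log_two_lt_d9
  have hl2 : 0 < Real.log 2 := Real.log_pos (by norm_num)
  have h1 : Real.log (Real.log 2) ≥ 1 - 1/Real.log 2 := by
    have := Real.log_le_sub_one_of_pos (x := 1/Real.log 2) (by positivity)
    rw [Real.log_div one_ne_zero hl2.ne', Real.log_one] at this
    linarith
  rw [le_div_iff₀ hl2]
  have h2 : (1:ℝ)/Real.log 2 ≤ 1/0.6931471803 := by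
    apply one_div_le_one_div_of_le (by norm_num) hgt.le
  nlinarith

lemma aux_real_part (p h d : ℕ) (hp : 1 ≤ p) (hh : 1 ≤ h)
    (key : 2^d ≤ (2*(d+1)^p + 1)^h) :
    (d:ℝ) ≤ 4*h*p*Real.logb 2 (2*h*p) := by
  rcases Nat.lt_or_ge (h*p) 2 with hsm | hbig
  · -- h = p = 1
    have hp1 : p = 1 := by nlinarith
    have hh1 : h = 1 := by nlinarith
    subst hp1; subst hh1
    have hd4 : d ≤ 4 := by
      by_contra hcon
      have := aux_lin_lt_pow d (by omega)
      simp only [pow_one] at key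
      omega
    have : Real.logb 2 (2*1*1 : ℝ) = 1 := by
      norm_num
    push_cast
    rw [show ((2:ℝ)*1*1) = 2 by ring]
    rw [Real.logb_self_eq_one (show (1:ℝ)<2 by norm_num)]
    have hd4' : (d:ℝ) ≤ 4 := by exact_mod_cast hd4
    linarith
  · -- m = 2hp ≥ 4
    set m : ℝ := 2*(h:ℝ)*(p:ℝ) with hmdef
    have hm4 : (4:ℝ) ≤ m := by
      have : (2:ℝ) ≤ (h:ℝ)*(p:ℝ) := by exact_mod_cast hbig
      nlinarith
    have hmpos : (0:ℝ) < m := by linarith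
    -- step 1 : d ≤ 2h + p h logb2 (d+1)
    have hcast : (2:ℝ)^d ≤ (4*((d:ℝ)+1)^p)^h := by
      have h1 : (2*(d+1)^p + 1 : ℕ) ≤ 4*(d+1)^p := by
        have : 1 ≤ (d+1)^p := Nat.one_le_pow _ _ (by omega)
        omega
      have h2 : (2:ℕ)^d ≤ (4*(d+1)^p)^h := key.trans (Nat.pow_le_pow_left h1 h)
      exact_mod_cast h2
    have hdle : (d:ℝ) ≤ 2*h + p*h*Real.logb 2 ((d:ℝ)+1) := by
      have hpos1 : (0:ℝ) < 2^d := by positivity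
      have hmono := Real.logb_le_logb_of_le (b := 2) (by norm_num) hpos1 hcast
      rw [Real.logb_pow, Real.logb_pow, Real.logb_self_eq_one (show (1:ℝ)<2 by norm_num)] at hmono
      have e3 : Real.logb 2 (4*((d:ℝ)+1)^p)
          = 2 + p*Real.logb 2 ((d:ℝ)+1) := by
        rw [Real.logb_mul (by norm_num) (by positivity), Real.logb_pow]
        congr 1
        rw [show (4:ℝ) = 2^(2:ℕ) by norm_num, Real.logb_pow,
          Real.logb_self_eq_one (show (1:ℝ)<2 by norm_num)]
        norm_num
      rw [e3] at hmono
      nlinarith [hmono, (Nat.cast_nonneg h : (0:ℝ) ≤ (h:ℝ))]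
    -- step 2 : apply log bound
    set c : ℝ := (Real.log (Real.log 2) + 1)/Real.log 2 with hcdef
    have hc : (1:ℝ)/2 ≤ c := aux_cbound
    have hlb := aux_logb_lin m ((d:ℝ)+1) hmpos (by positivity)
    have hlm : (2:ℝ) ≤ Real.logb 2 m := by
      have : Real.logb 2 (4:ℝ) ≤ Real.logb 2 m :=
        Real.logb_le_logb_of_le (b:=2) (by norm_num) (by norm_num) hm4
      rw [show (4:ℝ) = 2^(2:ℕ) by norm_num, Real.logb_pow,
        Real.logb_self_eq_one (show (1:ℝ)<2 by norm_num)] at this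
      push_cast at this
      linarith
    have h2h : 2*(h:ℝ) ≤ m := by
      have hp1 : (1:ℝ) ≤ (p:ℝ) := by exact_mod_cast hp
      have hh0 : (0:ℝ) ≤ (h:ℝ) := Nat.cast_nonneg h
      nlinarith
    have hph : (p:ℝ)*(h:ℝ) = m/2 := by rw [hmdef]; ring
    have hL : Real.logb 2 ((d:ℝ)+1) ≤ ((d:ℝ)+1)/m + Real.logb 2 m - c := hlb
    have hlogd : (0:ℝ) ≤ Real.logb 2 ((d:ℝ)+1) := by
      apply Real.logb_nonneg (by norm_num)
      have : (0:ℝ) ≤ (d:ℝ) := Nat.cast_nonneg d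
      linarith
    -- d ≤ 2h + (m/2) L ≤ m + (m/2)((d+1)/m + logb m - c)
    have hstep : (d:ℝ) ≤ m + (m/2)*(((d:ℝ)+1)/m + Real.logb 2 m - c) := by
      have := mul_le_mul_of_nonneg_left hL (by linarith : (0:ℝ) ≤ m/2)
      calc (d:ℝ) ≤ 2*h + p*h*Real.logb 2 ((d:ℝ)+1) := hdle
        _ = 2*h + (m/2)*Real.logb 2 ((d:ℝ)+1) := by rw [← hph]; try ring
        _ ≤ m + (m/2)*Real.logb 2 ((d:ℝ)+1) := by nlinarith [h2h, hlogd]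
        _ ≤ m + (m/2)*(((d:ℝ)+1)/m + Real.logb 2 m - c) := by linarith [this]
    have hexp : (m/2)*(((d:ℝ)+1)/m) = ((d:ℝ)+1)/2 := by field_simp
    have hfin : (d:ℝ) ≤ 2*m + 1 + m*Real.logb 2 m - m*c := by nlinarith [hstep, hexp]
    have : (d:ℝ) ≤ 2*m*Real.logb 2 m := by nlinarith
    calc (d:ℝ) ≤ 2*m*Real.logb 2 m := this
      _ = 4*h*p*Real.logb 2 (2*h*p) := by rw [hmdef]; try ring

lemma aux_count {Ω : Type*} (𝒜 : Set (Set Ω)) (p h : ℕ) (hh : 1 ≤ h)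
    (hvc : ∀ B : Finset Ω, Shatters 𝒜 B → B.card ≤ p)
    (B : Finset Ω) (hB : Shatters (InterClass 𝒜 h) B) :
    2 ^ B.card ≤ (2 * (B.card + 1) ^ p + 1) ^ h := by
  classical
  set F : Finset (Finset Ω) :=
    B.powerset.filter (fun u => ∃ A ∈ 𝒜, A ∩ (B : Set Ω) = (u : Set Ω)) with hF
  -- VC of the trace family
  have hFvc : ∀ s : Finset Ω, F.Shatters s → s.card ≤ p := by
    intro s hs
    have hsB : s ⊆ B := by
      obtain ⟨u, huF, hsu⟩ := hs (Finset.Subset.refl s)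
      exact (Finset.inter_eq_left.mp hsu).trans
        (Finset.mem_powerset.1 (Finset.mem_filter.1 huF).1)
    apply hvc
    intro C hC
    obtain ⟨u, huF, hsu⟩ := hs hC
    obtain ⟨A, hA, hAu⟩ := (Finset.mem_filter.1 huF).2
    refine ⟨A, hA, ?_⟩
    have hsB' : (s : Set Ω) ⊆ (B : Set Ω) := Finset.coe_subset.2 hsB
    calc A ∩ (s : Set Ω) = (A ∩ (B : Set Ω)) ∩ (s : Set Ω) := by
          rw [Set.inter_assoc, Set.inter_eq_self_of_subset_right hsB']
      _ = (u : Set Ω) ∩ (s : Set Ω) := by rw [hAu]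
      _ = ((s ∩ u : Finset Ω) : Set Ω) := by rw [Finset.coe_inter, Set.inter_comm]
      _ = (C : Set Ω) := by rw [hsu]
  -- Sauer-Shelah bound on the trace family
  have hFcard : F.card ≤ (B.card + 1)^p := by
    have h2 : F.shatterer ⊆ (Finset.range (p+1)).biUnion
        (fun i => Finset.powersetCard i B) := by
      intro s hs
      rw [Finset.mem_shatterer] at hs
      have hcard := hFvc s hs
      have hsB : s ⊆ B := by
        obtain ⟨u, huF, hsu⟩ := hs.exists_superset
        exact hsu.trans (Finset.mem_powerset.1 (Finset.mem_filter.1 huF).1)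
      rw [Finset.mem_biUnion]
      exact ⟨s.card, Finset.mem_range.2 (by omega),
        Finset.mem_powersetCard.2 ⟨hsB, rfl⟩⟩
    calc F.card ≤ F.shatterer.card := F.card_le_card_shatterer
      _ ≤ ((Finset.range (p+1)).biUnion (fun i => Finset.powersetCard i B)).card :=
          Finset.card_le_card h2
      _ ≤ ∑ i ∈ Finset.range (p+1), (Finset.powersetCard i B).card :=
          Finset.card_biUnion_le
      _ = ∑ i ∈ Finset.range (p+1), B.card.choose i := by
          simp [Finset.card_powersetCard]
      _ ≤ (B.card+1)^p := aux_sum_choose _ _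
  set G : Finset (Finset Ω) := insert B (F ∪ F.image (fun u => B \ u)) with hG
  have hGcard : G.card ≤ 2*(B.card+1)^p + 1 := by
    have := Finset.card_insert_le B (F ∪ F.image (fun u => B \ u))
    have h2 := Finset.card_union_le F (F.image (fun u => B \ u))
    have h3 := Finset.card_image_le (s := F) (f := fun u => B \ u)
    rw [hG]
    omega
  -- main construction
  have main : ∀ C ∈ B.powerset, ∃ t : Fin h → Finset Ω,
      (∀ i, t i ∈ G) ∧ (⋂ i, ((t i : Finset Ω) : Set Ω)) = (C : Set Ω) := by
    intro C hC
    rw [Finset.mem_powerset] at hC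
    obtain ⟨S, hS, hSC⟩ := hB C hC
    obtain ⟨T, hTcard, hTmem, rfl⟩ := hS
    set l := T.toList with hl
    have hlen : l.length = T.card := Finset.length_toList T
    refine ⟨fun i => if hi : (i:ℕ) < l.length then B.filter (· ∈ l.get ⟨i, hi⟩) else B,
      ?_, ?_⟩
    · intro i
      dsimp only
      by_cases hi : (i:ℕ) < l.length
      · rw [dif_pos hi]
        have hmem : l.get ⟨i, hi⟩ ∈ T := Finset.mem_toList.1 (l.get_mem _)
        rcases hTmem _ hmem with hA | ⟨A', hA', hEq⟩
        · apply Finset.mem_insert_of_mem; apply Finset.mem_union_left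
          rw [hF, Finset.mem_filter]
          refine ⟨Finset.mem_powerset.2 (Finset.filter_subset _ _), l.get ⟨i,hi⟩, hA, ?_⟩
          ext x
          simp [Finset.coe_filter, Set.mem_setOf_eq, and_comm]
        · apply Finset.mem_insert_of_mem; apply Finset.mem_union_right
          rw [Finset.mem_image]
          refine ⟨B.filter (· ∈ A'), ?_, ?_⟩
          · rw [hF, Finset.mem_filter]
            refine ⟨Finset.mem_powerset.2 (Finset.filter_subset _ _), A', hA', ?_⟩
            ext x
            simp [Finset.coe_filter, Set.mem_setOf_eq, and_comm]
          · ext x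
            simp only [Finset.mem_sdiff, Finset.mem_filter, hEq, Set.mem_compl_iff]
            tauto
      · rw [dif_neg hi]
        exact Finset.mem_insert_self _ _
    · ext x
      simp only [Set.mem_iInter]
      constructor
      · intro hx
        rw [← hSC]
        have hxB : x ∈ (B : Set Ω) := by
          have h0 := hx ⟨0, hh⟩
          dsimp only at h0
          by_cases hcase : ((⟨0, hh⟩ : Fin h) : ℕ) < l.length
          · rw [dif_pos hcase] at h0
            have := Finset.mem_coe.1 h0
            exact Finset.mem_coe.2 (Finset.mem_of_mem_filter x this)
          · rw [dif_neg hcase] at h0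
            exact h0
        refine ⟨?_, hxB⟩
        rw [Set.mem_sInter]
        intro A hA
        rw [Finset.mem_coe] at hA
        obtain ⟨n, hn⟩ := List.mem_iff_get.1 (Finset.mem_toList.2 hA)
        have hnh : (n:ℕ) < h := lt_of_lt_of_le (hlen ▸ n.2) hTcard
        have hxi := hx ⟨(n:ℕ), hnh⟩
        try dsimp only at hxi
        have hcond : ((⟨(n:ℕ), hnh⟩ : Fin h) : ℕ) < l.length := n.2
        rw [dif_pos hcond] at hxi
        have hget : l.get ⟨((⟨(n:ℕ), hnh⟩ : Fin h) : ℕ), hcond⟩ = A := by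
          rw [← hn]
        rw [hget] at hxi
        have := Finset.mem_coe.1 hxi
        exact (Finset.mem_filter.1 this).2
      · intro hx i
        rw [← hSC] at hx
        obtain ⟨hxT, hxB⟩ := hx
        by_cases hi : (i:ℕ) < l.length
        · rw [dif_pos hi]
          have hmem : l.get ⟨i, hi⟩ ∈ T := Finset.mem_toList.1 (l.get_mem _)
          have hxA : x ∈ l.get ⟨i, hi⟩ := hxT _ (Finset.mem_coe.2 hmem)
          exact Finset.mem_coe.2 (Finset.mem_filter.2 ⟨Finset.mem_coe.1 hxB, hxA⟩)
        · rw [dif_neg hi]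
          exact hxB
  -- the injection and counting
  let φ : Finset Ω → (Fin h → Finset Ω) := fun C =>
    if hC : C ∈ B.powerset then Classical.choose (main C hC) else fun _ => ∅
  have hφmem : ∀ C (hC : C ∈ B.powerset), ∀ i, φ C i ∈ G := by
    intro C hC i
    simp only [φ, dif_pos hC]
    exact (Classical.choose_spec (main C hC)).1 i
  have hφeq : ∀ C (hC : C ∈ B.powerset),
      (⋂ i, ((φ C i : Finset Ω) : Set Ω)) = (C : Set Ω) := by
    intro C hC
    simp only [φ, dif_pos hC]
    exact (Classical.choose_spec (main C hC)).2
  have hcount : B.powerset.card ≤ (Fintype.piFinset (fun _ : Fin h => G)).card := by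
    apply Finset.card_le_card_of_injOn φ
    · intro C hC
      rw [Finset.mem_coe, Fintype.mem_piFinset]
      exact hφmem C hC
    · intro C1 h1 C2 h2 heq
      apply Finset.coe_injective
      rw [← hφeq C1 h1, ← hφeq C2 h2, heq]
  rw [Finset.card_powerset] at hcount
  have hpi : (Fintype.piFinset (fun _ : Fin h => G)).card = G.card ^ h := by
    rw [Fintype.card_piFinset]
    simp
  rw [hpi] at hcount
  exact hcount.trans (Nat.pow_le_pow_left hGcard h)

/-- If `𝒜` has VC dimension at most `p`, then the class of intersections of at most `h`
members of `𝒜` or complements of members of `𝒜` has VC dimension at most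
`4hp·log₂(2hp)`. -/
theorem vc_dim_intersections {Ω : Type*} (𝒜 : Set (Set Ω)) (p h : ℕ)
    (hp : 1 ≤ p) (hh : 1 ≤ h)
    (hvc : ∀ B : Finset Ω, Shatters 𝒜 B → B.card ≤ p) :
    ∀ B : Finset Ω, Shatters (InterClass 𝒜 h) B →
      (B.card : ℝ) ≤ 4 * h * p * Real.logb 2 (2 * h * p) := by
  intro B hB
  exact aux_real_part p h B.card hp hh (aux_count 𝒜 p h hh hvc B hB)
end

section
/- Let (Ω, ρ, μ) be a metric probability space with concentration function α, and let C be a measurable subset of Ω with μ(C) = 1/2 partitioned as C = A ∪ B with μ(A) = μ(B) = μ(C)/2 (disjoint up to null sets). Then for every ε > 0, the set of points ω ∈ C lying within distance ε of both A and B has μ_C-measure at least 1 − 2·α_C(ε), where α_C is the concentration function of C with the induced metric and normalized measure μ_C = μ(· ∩ C)/μ(C). -/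
open MeasureTheory Metric

/-- The concentration function of a subset `C ⊆ Ω` equipped with the induced metric and
the normalized restricted measure `μ_C = μ(· ∩ C)/μ(C)`.  (In the induced metric, the
open `ε`-neighbourhood of `A ⊆ C` inside `C` is `A_ε ∩ C`.) -/
noncomputable def subConcFn {Ω : Type*} [PseudoMetricSpace Ω] [MeasurableSpace Ω]
    (μ : Measure Ω) (C : Set Ω) (ε : ℝ) : ℝ :=
  1 - sInf {r : ℝ | ∃ A : Set Ω, A ⊆ C ∧ MeasurableSet A ∧
      (μ A).toReal / (μ C).toReal ≥ 1/2 ∧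
      (μ (Metric.thickening ε A ∩ C)).toReal / (μ C).toReal = r}

/-- Branching lemma: if a node `C` of measure `1/2` is split into halves `A` and `B`
(each of measure `μ(C)/2`, disjoint up to null sets), then for every `ε > 0` the set of
query points `ω ∈ C` within distance `ε` of both `A` and `B` has normalized measure at
least `1 − 2·α_C(ε)`; at all such points the search must branch into both children. -/
theorem branching_lemma {Ω : Type*} [PseudoMetricSpace Ω] [MeasurableSpace Ω]
    (μ : Measure Ω) [IsProbabilityMeasure μ] (C A B : Set Ω)
    (hCmeas : MeasurableSet C) (hAmeas : MeasurableSet A) (hBmeas : MeasurableSet B)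
    (hC : (μ C).toReal = 1/2) (hAB : C = A ∪ B) (hnull : (μ (A ∩ B)).toReal = 0)
    (hA : (μ A).toReal = (μ C).toReal / 2) (hB : (μ B).toReal = (μ C).toReal / 2) :
    ∀ ε : ℝ, 0 < ε →
      (μ {ω ∈ C | (∃ a ∈ A, dist ω a < ε) ∧ ∃ b ∈ B, dist ω b < ε}).toReal
          / (μ C).toReal ≥ 1 - 2 * subConcFn μ C ε := by
  intro ε hε
  set X := Metric.thickening ε A with hX
  set Y := Metric.thickening ε B with hY
  have hAsub : A ⊆ C := hAB ▸ Set.subset_union_left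
  have hBsub : B ⊆ C := hAB ▸ Set.subset_union_right
  have hAX : A ⊆ X := self_subset_thickening hε A
  have hBY : B ⊆ Y := self_subset_thickening hε B
  have hCor : ∀ x ∈ C, x ∈ A ∨ x ∈ B := fun x hx => by rw [hAB] at hx; exact hx
  -- the target set is T = X ∩ Y ∩ C
  set T := X ∩ Y ∩ C with hT
  have hset : {ω ∈ C | (∃ a ∈ A, dist ω a < ε) ∧ ∃ b ∈ B, dist ω b < ε} = T := by
    ext ω
    simp only [hT, Set.mem_setOf_eq, Set.mem_inter_iff, hX, hY, Metric.mem_thickening_iff]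
    tauto
  set S : Set ℝ := {r : ℝ | ∃ A : Set Ω, A ⊆ C ∧ MeasurableSet A ∧
      (μ A).toReal / (μ C).toReal ≥ 1/2 ∧
      (μ (Metric.thickening ε A ∩ C)).toReal / (μ C).toReal = r} with hS
  have hbdd : BddBelow S := by
    refine ⟨0, ?_⟩
    rintro r ⟨A', _, _, _, hr⟩
    exact hr ▸ div_nonneg ENNReal.toReal_nonneg ENNReal.toReal_nonneg
  have hmemA : (μ (X ∩ C)).toReal / (μ C).toReal ∈ S :=
    ⟨A, hAsub, hAmeas, by rw [hA, hC]; norm_num, rfl⟩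
  have hmemB : (μ (Y ∩ C)).toReal / (μ C).toReal ∈ S :=
    ⟨B, hBsub, hBmeas, by rw [hB, hC]; norm_num, rfl⟩
  have hiA := csInf_le hbdd hmemA
  have hiB := csInf_le hbdd hmemB
  have hα : subConcFn μ C ε = 1 - sInf S := rfl
  -- helper: subadditivity in ℝ
  have hsub : ∀ s t : Set Ω, (μ (s ∪ t)).toReal ≤ (μ s).toReal + (μ t).toReal := by
    intro s t
    rw [← ENNReal.toReal_add (measure_ne_top μ s) (measure_ne_top μ t)]
    exact ENNReal.toReal_mono (by finiteness) (measure_union_le s t)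
  have hmono : ∀ s t : Set Ω, s ⊆ t → (μ s).toReal ≤ (μ t).toReal := fun s t h =>
    ENNReal.toReal_mono (measure_ne_top μ t) (measure_mono h)
  -- Caratheodory split of T along the measurable set A
  have car : (μ T).toReal = (μ (T ∩ A)).toReal + (μ (T \ A)).toReal := by
    rw [← ENNReal.toReal_add (measure_ne_top μ _) (measure_ne_top μ _),
      measure_inter_add_diff T hAmeas]
  -- T ∩ A ⊇ A ∩ Y
  have m1 : (μ (A ∩ Y)).toReal ≤ (μ (T ∩ A)).toReal := by
    refine hmono _ _ ?_
    rintro x ⟨hxA, hxY⟩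
    exact ⟨⟨⟨hAX hxA, hxY⟩, hAsub hxA⟩, hxA⟩
  -- Y ∩ C ⊆ (A ∩ Y) ∪ B
  have m2 : (μ (Y ∩ C)).toReal ≤ (μ (A ∩ Y)).toReal + (μ B).toReal := by
    refine le_trans (hmono _ _ ?_) (hsub _ _)
    rintro x ⟨hxY, hxC⟩
    rcases hCor x hxC with h | h
    · exact Or.inl ⟨h, hxY⟩
    · exact Or.inr h
  -- X ∩ B ⊆ (T \ A) ∪ (A ∩ B)
  have m3 : (μ (X ∩ B)).toReal ≤ (μ (T \ A)).toReal + (μ (A ∩ B)).toReal := by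
    refine le_trans (hmono _ _ ?_) (hsub _ _)
    rintro x ⟨hxX, hxB⟩
    by_cases h : x ∈ A
    · exact Or.inr ⟨h, hxB⟩
    · exact Or.inl ⟨⟨⟨hxX, hBY hxB⟩, hBsub hxB⟩, h⟩
  -- X ∩ C ⊆ (X ∩ B) ∪ A
  have m4 : (μ (X ∩ C)).toReal ≤ (μ (X ∩ B)).toReal + (μ A).toReal := by
    refine le_trans (hmono _ _ ?_) (hsub _ _)
    rintro x ⟨hxX, hxC⟩
    rcases hCor x hxC with h | h
    · exact Or.inr h
    · exact Or.inl ⟨hxX, h⟩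
  rw [hset, hα]
  rw [hC] at *
  have e : ∀ x : ℝ, x / ((1:ℝ)/2) = 2 * x := fun x => by ring
  rw [e] at hiA hiB ⊢
  linarith
end
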